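/- Let ψp, ψm : I → ℝ be twice differentiable, nonvanishing on an open interval I, and W0 : I → ℝ. Suppose (ψp'' + 2·W0·ψp')·ψm + (ψm'' - 2·W0·ψm')·ψp - 2·ψp'·ψm' = 0 on I. Then with W1p = ψp'/ψp and W1m = ψm'/ψm, the two potentials V = (W0 + W1p - W1m)² - (W0 + W1p - W1m)' and V0 - 2·W1p' coincide pointwise, where V0 = W0² - W0'. -/

import Mathlib

/-- Under the compatibility condition (cc12) with `ε = 0`, the extended partner
potential `V = W² - W'` reduces to `V0 - 2 W1p'` where `V0 = W0² - W0'`. -/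
theorem compatibility_reduces_V
    (I : Set ℝ) (hI : IsOpen I) (ψp ψm W0 : ℝ → ℝ)
    (hp1 : ∀ x ∈ I, DifferentiableAt ℝ ψp x)
    (hp2 : ∀ x ∈ I, DifferentiableAt ℝ (deriv ψp) x)
    (hm1 : ∀ x ∈ I, DifferentiableAt ℝ ψm x)
    (hm2 : ∀ x ∈ I, DifferentiableAt ℝ (deriv ψm) x)
    (h0 : ∀ x ∈ I, DifferentiableAt ℝ W0 x)
    (hpne : ∀ x ∈ I, ψp x ≠ 0) (hmne : ∀ x ∈ I, ψm x ≠ 0)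
    (hcc : ∀ x ∈ I,
      (deriv (deriv ψp) x + 2 * W0 x * deriv ψp x) * ψm x
        + (deriv (deriv ψm) x - 2 * W0 x * deriv ψm x) * ψp x
        - 2 * deriv ψp x * deriv ψm x = 0) :
    ∀ x ∈ I,
      (W0 x + deriv ψp x / ψp x - deriv ψm x / ψm x) ^ 2
        - deriv (fun y => W0 y + deriv ψp y / ψp y - deriv ψm y / ψm y) x =
      (W0 x ^ 2 - deriv W0 x) - 2 * deriv (fun y => deriv ψp y / ψp y) x := by
  intro x hx
  have hfp : DifferentiableAt ℝ (fun y => deriv ψp y / ψp y) x :=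
    (hp2 x hx).div (hp1 x hx) (hpne x hx)
  have hfm : DifferentiableAt ℝ (fun y => deriv ψm y / ψm y) x :=
    (hm2 x hx).div (hm1 x hx) (hmne x hx)
  have hdp : deriv (fun y => deriv ψp y / ψp y) x
      = (deriv (deriv ψp) x * ψp x - deriv ψp x * deriv ψp x) / ψp x ^ 2 :=
    deriv_div (hp2 x hx) (hp1 x hx) (hpne x hx)
  have hdm : deriv (fun y => deriv ψm y / ψm y) x
      = (deriv (deriv ψm) x * ψm x - deriv ψm x * deriv ψm x) / ψm x ^ 2 :=
    deriv_div (hm2 x hx) (hm1 x hx) (hmne x hx)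
  have hsum : deriv (fun y => W0 y + deriv ψp y / ψp y - deriv ψm y / ψm y) x
      = deriv W0 x + deriv (fun y => deriv ψp y / ψp y) x
        - deriv (fun y => deriv ψm y / ψm y) x := by
    rw [deriv_fun_sub (show DifferentiableAt ℝ (fun y => W0 y + deriv ψp y / ψp y) x from (h0 x hx).add hfp) hfm, deriv_fun_add (h0 x hx) hfp]
  rw [hsum, hdp, hdm]
  have hc := hcc x hx
  have hpn := hpne x hx
  have hmn := hmne x hx
  field_simp
  linear_combination (ψp x * ψm x) * hc
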